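/- Let G be a finite connected simple graph, let v,w be vertices, and let p be a shortest v-w-path in G. Then there exists an independent set R ⊆ V(G) such that (i) the bipartite subgraph of G consisting of all edges with one endpoint in R and one in V∖R is connected, and (ii) the path p alternates between R and V∖R; moreover one may prescribe whether v ∈ R or v ∈ V∖R. -/

import Mathlib

open Finset

/-- The bipartite subgraph `G(R, V∖R)` consisting of the edges of `G` with exactly one
endpoint in `R`. -/
def bipartiteBetween {V : Type*} (G : SimpleGraph V) (R : Set V) : SimpleGraph V where
  Adj a b := G.Adj a b ∧ ((a ∈ R ∧ b ∉ R) ∨ (a ∉ R ∧ b ∈ R))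
  symm := by
    constructor
    intro a b h
    exact ⟨h.1.symm, h.2.elim (fun h' => Or.inr ⟨h'.2, h'.1⟩) (fun h' => Or.inl ⟨h'.2, h'.1⟩)⟩
  loopless := by
    constructor
    intro a h
    exact h.2.elim (fun h' => h'.2 h'.1) (fun h' => h'.1 h'.2)

namespace Stmt1Aux

variable {V : Type*} [Fintype V] [DecidableEq V]

lemma bip_adj {G : SimpleGraph V} {R : Set V} {a b : V} :
    (bipartiteBetween G R).Adj a b ↔
      G.Adj a b ∧ ((a ∈ R ∧ b ∉ R) ∨ (a ∉ R ∧ b ∈ R)) := Iff.rfl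

/-- The bipartite graph between `R` and its complement, restricted to the vertex set `S`. -/
def K (G : SimpleGraph V) (S : Finset V) (R : Set V) : SimpleGraph V where
  Adj a b := a ∈ S ∧ b ∈ S ∧ (bipartiteBetween G R).Adj a b
  symm := ⟨fun a b h => ⟨h.2.1, h.1, h.2.2.symm⟩⟩
  loopless := ⟨fun a h => (bipartiteBetween G R).loopless.irrefl a h.2.2⟩

lemma K_adj {G : SimpleGraph V} {S : Finset V} {R : Set V} {a b : V} :
    (K G S R).Adj a b ↔
      a ∈ S ∧ b ∈ S ∧ (bipartiteBetween G R).Adj a b := Iff.rfl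

lemma K_le_bip (G : SimpleGraph V) (S : Finset V) (R : Set V) :
    K G S R ≤ bipartiteBetween G R := by
  intro a b h
  exact (K_adj.mp h).2.2

lemma K_le_insert (G : SimpleGraph V) (S : Finset V) (R : Set V) (u : V) :
    K G S R ≤ K G (insert u S) R := by
  intro a b h
  obtain ⟨ha, hb, h2⟩ := K_adj.mp h
  exact K_adj.mpr ⟨mem_insert_of_mem ha, mem_insert_of_mem hb, h2⟩

lemma crossing {G : SimpleGraph V} {S : Finset V} :
    ∀ {a b : V}, G.Walk a b → a ∈ S → b ∉ S → ∃ s u, s ∈ S ∧ u ∉ S ∧ G.Adj s u := by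
  intro a b q
  induction q with
  | nil => intro h1 h2; exact absurd h1 h2
  | @cons u x b h q ih =>
    intro hu hb
    by_cases hx : x ∈ S
    · exact ih hx hb
    · exact ⟨u, x, hu, hx, h⟩

lemma extend (G : SimpleGraph V) (hG : G.Connected) (v : V) :
    ∀ n (S : Finset V) (R : Set V), Sᶜ.card ≤ n → v ∈ S → (∀ x ∈ R, x ∈ S) →
    (∀ a ∈ R, ∀ b ∈ R, ¬ G.Adj a b) → (∀ x ∈ S, (K G S R).Reachable x v) →
    ∃ R' : Set V, (∀ x ∈ S, (x ∈ R' ↔ x ∈ R)) ∧ (∀ a ∈ R', ∀ b ∈ R', ¬ G.Adj a b) ∧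
      (∀ x : V, (bipartiteBetween G R').Reachable x v) := by
  intro n
  induction n with
  | zero =>
    intro S R hcard hv hRS hind hreach
    have hS : ∀ x, x ∈ S := by
      have hc : Sᶜ = ∅ := card_eq_zero.mp (le_antisymm hcard (Nat.zero_le _))
      intro x
      by_contra hx
      exact (eq_empty_iff_forall_notMem.mp hc x) (mem_compl.mpr hx)
    exact ⟨R, fun x _ => Iff.rfl, hind,
      fun x => (hreach x (hS x)).mono (K_le_bip G S R)⟩
  | succ n ih =>
    intro S R hcard hv hRS hind hreach
    by_cases hfull : ∀ x, x ∈ S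
    · exact ⟨R, fun x _ => Iff.rfl, hind,
        fun x => (hreach x (hfull x)).mono (K_le_bip G S R)⟩
    · push_neg at hfull
      obtain ⟨t, ht⟩ := hfull
      obtain ⟨q⟩ := hG.preconnected v t
      obtain ⟨s, u, hs, hu, hadj⟩ := crossing q hv ht
      have hcard' : (insert u S)ᶜ.card ≤ n := by
        have hss : (insert u S)ᶜ ⊂ Sᶜ := by
          refine (Finset.ssubset_iff_of_subset
            (compl_subset_compl.mpr (subset_insert u S))).mpr ?_
          exact ⟨u, mem_compl.mpr hu, by simp⟩
        have := Finset.card_lt_card hss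
        omega
      by_cases hdom : ∃ r ∈ R, G.Adj u r
      · obtain ⟨r, hr, hur⟩ := hdom
        have hreach' : ∀ x ∈ insert u S, (K G (insert u S) R).Reachable x v := by
          intro x hx
          rcases mem_insert.mp hx with rfl | hxS
          · have e1 : (K G (insert x S) R).Adj x r :=
              K_adj.mpr ⟨mem_insert_self _ _, mem_insert_of_mem (hRS r hr),
                bip_adj.mpr ⟨hur, Or.inr ⟨fun hc => hu (hRS x hc), hr⟩⟩⟩
            exact e1.reachable.trans
              ((hreach r (hRS r hr)).mono (K_le_insert G S R x))
          · exact (hreach x hxS).mono (K_le_insert G S R u)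
        obtain ⟨R', h1, h2, h3⟩ := ih (insert u S) R hcard' (mem_insert_of_mem hv)
          (fun x hx => mem_insert_of_mem (hRS x hx)) hind hreach'
        exact ⟨R', fun x hx => h1 x (mem_insert_of_mem hx), h2, h3⟩
      · push_neg at hdom
        have hsame : ∀ x ∈ S, (x ∈ insert u R ↔ x ∈ R) := by
          intro x hx
          simp only [Set.mem_insert_iff]
          constructor
          · rintro (rfl | h)
            · exact absurd hx hu
            · exact h
          · exact Or.inr
        have hind1 : ∀ a ∈ insert u R, ∀ b ∈ insert u R, ¬ G.Adj a b := by
          intro a ha b hb hab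
          rcases Set.mem_insert_iff.mp ha with hau | ha' <;>
            rcases Set.mem_insert_iff.mp hb with hbu | hb'
          · exact G.loopless.irrefl u (by rw [hau, hbu] at hab; exact hab)
          · exact hdom b hb' (hau ▸ hab)
          · exact hdom a ha' (hbu ▸ hab.symm)
          · exact hind a ha' b hb' hab
        have hle : K G S R ≤ K G (insert u S) (insert u R) := by
          intro a b h
          obtain ⟨ha, hb, h2⟩ := K_adj.mp h
          obtain ⟨hGab, hside⟩ := bip_adj.mp h2
          refine K_adj.mpr ⟨mem_insert_of_mem ha, mem_insert_of_mem hb,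
            bip_adj.mpr ⟨hGab, ?_⟩⟩
          rcases hside with ⟨h1, h2'⟩ | ⟨h1, h2'⟩
          · exact Or.inl ⟨(hsame a ha).mpr h1, fun hc => h2' ((hsame b hb).mp hc)⟩
          · exact Or.inr ⟨fun hc => h1 ((hsame a ha).mp hc), (hsame b hb).mpr h2'⟩
        have hreach' : ∀ x ∈ insert u S,
            (K G (insert u S) (insert u R)).Reachable x v := by
          intro x hx
          rcases mem_insert.mp hx with rfl | hxS
          · have hsR : s ∉ insert x R := by
              intro hc
              rcases Set.mem_insert_iff.mp hc with hcu | hc'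
              · exact hu (hcu ▸ hs)
              · exact hdom s hc' hadj.symm
            have e1 : (K G (insert x S) (insert x R)).Adj x s :=
              K_adj.mpr ⟨mem_insert_self _ _, mem_insert_of_mem hs,
                bip_adj.mpr ⟨hadj.symm, Or.inl ⟨Set.mem_insert _ _, hsR⟩⟩⟩
            exact e1.reachable.trans ((hreach s hs).mono hle)
          · exact (hreach x hxS).mono hle
        obtain ⟨R', h1, h2, h3⟩ := ih (insert u S) (insert u R) hcard'
          (mem_insert_of_mem hv)
          (fun x hx => by
            rcases Set.mem_insert_iff.mp hx with hxu | hx'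
            · exact hxu ▸ mem_insert_self _ _
            · exact mem_insert_of_mem (hRS x hx')) hind1 hreach'
        refine ⟨R', fun x hx => ?_, h2, h3⟩
        exact (h1 x (mem_insert_of_mem hx)).trans (hsame x hx)

lemma walk_split {G : SimpleGraph V} : ∀ {v w : V} (p : G.Walk v w) (i : ℕ), i ≤ p.length →
    ∃ (q : G.Walk v (p.getVert i)) (r : G.Walk (p.getVert i) w),
      q.length = i ∧ r.length + i = p.length := by
  intro v w p
  induction p with
  | nil =>
    intro i hi
    have hi0 : i = 0 := Nat.le_zero.mp hi
    subst hi0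
    exact ⟨SimpleGraph.Walk.nil.copy rfl (SimpleGraph.Walk.getVert_zero _).symm,
      SimpleGraph.Walk.nil.copy (SimpleGraph.Walk.getVert_zero _).symm rfl, by simp, by simp⟩
  | cons h q ihq =>
    intro i hi
    cases i with
    | zero =>
      exact ⟨SimpleGraph.Walk.nil.copy rfl (SimpleGraph.Walk.getVert_zero _).symm,
        (SimpleGraph.Walk.cons h q).copy (SimpleGraph.Walk.getVert_zero _).symm rfl,
        by simp, by simp⟩
    | succ i =>
      have hi' : i ≤ q.length := by
        simpa [SimpleGraph.Walk.length_cons] using hi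
      obtain ⟨q1, q2, hl1, hl2⟩ := ihq i hi'
      refine ⟨(SimpleGraph.Walk.cons h q1).copy rfl (SimpleGraph.Walk.getVert_cons_succ q h).symm,
        q2.copy (SimpleGraph.Walk.getVert_cons_succ q h).symm rfl, ?_, ?_⟩
      · simp [hl1]
      · simp only [SimpleGraph.Walk.length_copy, SimpleGraph.Walk.length_cons]
        omega

lemma support_get {G : SimpleGraph V} : ∀ {v w : V} (p : G.Walk v w) (i : ℕ)
    (h : i < p.support.length), p.support.get ⟨i, h⟩ = p.getVert i := by
  intro v w p
  induction p with
  | nil =>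
    intro i h
    have : i = 0 := Nat.lt_one_iff.mp (by
      simpa [SimpleGraph.Walk.support_nil] using h)
    subst this
    rfl
  | cons h q ih =>
    intro i hh
    cases i with
    | zero => simp [SimpleGraph.Walk.support_cons, SimpleGraph.Walk.getVert_zero]
    | succ i =>
      have hh' : i < q.support.length := by
        simpa [SimpleGraph.Walk.support_cons] using hh
      simpa [SimpleGraph.Walk.support_cons, SimpleGraph.Walk.getVert_cons_succ] using ih i hh'

end Stmt1Aux

open Stmt1Aux in
/-- for a connected graph `G`, vertices `v, w` and a shortest `v`-`w`-path `p`,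
there is an independent set `R` such that the bipartite subgraph `G(R, V∖R)` is connected and
`p` alternates between `R` and `V∖R`, where one may prescribe whether `v ∈ R`. -/
theorem stmt1 {V : Type*} [Fintype V] [DecidableEq V] (G : SimpleGraph V)
    (hG : G.Connected) (v w : V) (p : G.Walk v w) (hp : p.IsPath)
    (hshort : p.length = G.dist v w) (c : Bool) :
    ∃ R : Set V,
      (∀ a ∈ R, ∀ b ∈ R, ¬ G.Adj a b) ∧
      (bipartiteBetween G R).Connected ∧
      (∀ i : ℕ, ∀ h : i + 1 < p.support.length,
        (p.support.get ⟨i, by omega⟩ ∈ R ↔ p.support.get ⟨i + 1, h⟩ ∉ R)) ∧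
      (v ∈ R ↔ c = true) := by
  classical
  set e : ℕ := if c then 0 else 1 with he_def
  have he : e = 0 ∨ e = 1 := by
    cases c <;> simp [he_def]
  set R0 : Set V := {x | ∃ i, i ≤ p.length ∧ p.getVert i = x ∧ i % 2 = e} with hR0
  set S0 : Finset V := p.support.toFinset with hS0
  -- distances along the shortest path
  have hdist : ∀ i, i ≤ p.length → G.dist v (p.getVert i) = i := by
    intro i hi
    obtain ⟨q, r, hq, hr⟩ := walk_split p i hi
    have h1 : G.dist v (p.getVert i) ≤ q.length := SimpleGraph.dist_le q
    have h2 : G.dist (p.getVert i) w ≤ r.length := SimpleGraph.dist_le r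
    have h3 : G.dist v w ≤ G.dist v (p.getVert i) + G.dist (p.getVert i) w :=
      hG.dist_triangle
    omega
  have hmem : ∀ i, i ≤ p.length → (p.getVert i ∈ R0 ↔ i % 2 = e) := by
    intro i hi
    constructor
    · rintro ⟨j, hj, hje, hjp⟩
      have : j = i := by
        have d1 := hdist j hj
        have d2 := hdist i hi
        rw [hje] at d1
        omega
      omega
    · intro hp'
      exact ⟨i, hi, rfl, hp'⟩
  have hS0mem : ∀ i, i ≤ p.length → p.getVert i ∈ S0 := by
    intro i hi
    rw [hS0, List.mem_toFinset]
    exact SimpleGraph.Walk.mem_support_iff_exists_getVert.mpr ⟨i, rfl, hi⟩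
  -- independence of R0
  have hind0 : ∀ a ∈ R0, ∀ b ∈ R0, ¬ G.Adj a b := by
    rintro a ⟨i, hi, rfl, hip⟩ b ⟨j, hj, rfl, hjp⟩ hab
    have d1 := hdist i hi
    have d2 := hdist j hj
    have hdij : G.dist (p.getVert i) (p.getVert j) ≤ 1 := by
      have := SimpleGraph.dist_le hab.toWalk
      simpa using this
    have hdji : G.dist (p.getVert j) (p.getVert i) ≤ 1 := by
      have := SimpleGraph.dist_le hab.symm.toWalk
      simpa using this
    have t1 : G.dist v (p.getVert j) ≤ G.dist v (p.getVert i) +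
        G.dist (p.getVert i) (p.getVert j) := hG.dist_triangle
    have t2 : G.dist v (p.getVert i) ≤ G.dist v (p.getVert j) +
        G.dist (p.getVert j) (p.getVert i) := hG.dist_triangle
    have hij : i = j := by omega
    subst hij
    exact G.loopless.irrefl _ hab
  -- reachability along the path
  have hreach0 : ∀ i, i ≤ p.length → (K G S0 R0).Reachable (p.getVert i) v := by
    intro i
    induction i with
    | zero =>
      intro _
      rw [SimpleGraph.Walk.getVert_zero]
    | succ i ih =>
      intro hi
      have hi' : i ≤ p.length := by omega
      have hadj : G.Adj (p.getVert i) (p.getVert (i + 1)) :=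
        p.adj_getVert_succ (by omega)
      have hside : (p.getVert (i+1) ∈ R0 ∧ p.getVert i ∉ R0) ∨
          (p.getVert (i+1) ∉ R0 ∧ p.getVert i ∈ R0) := by
        by_cases hpi : i % 2 = e
        · exact Or.inr ⟨(hmem (i+1) hi).not.mpr (by omega), (hmem i hi').mpr hpi⟩
        · exact Or.inl ⟨(hmem (i+1) hi).mpr (by rcases he with h' | h' <;> omega),
            (hmem i hi').not.mpr hpi⟩
      have hK : (K G S0 R0).Adj (p.getVert (i+1)) (p.getVert i) :=
        K_adj.mpr ⟨hS0mem (i+1) hi, hS0mem i hi', bip_adj.mpr ⟨hadj.symm, hside⟩⟩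
      exact hK.reachable.trans (ih hi')
  have hvS0 : v ∈ S0 := by
    rw [hS0, List.mem_toFinset]
    exact p.start_mem_support
  obtain ⟨R', hsame, hind, hreachAll⟩ := extend G hG v S0ᶜ.card S0 R0 le_rfl hvS0
    (fun x hx => by
      obtain ⟨i, hi, rfl, _⟩ := hx
      exact hS0mem i hi)
    hind0
    (fun x hx => by
      rw [hS0, List.mem_toFinset] at hx
      obtain ⟨i, rfl, hi⟩ := SimpleGraph.Walk.mem_support_iff_exists_getVert.mp hx
      exact hreach0 i hi)
  refine ⟨R', hind, ?_, ?_, ?_⟩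
  · haveI := hG.nonempty
    exact ⟨fun a b => (hreachAll a).trans (hreachAll b).symm⟩
  · intro i h
    have hlen : p.support.length = p.length + 1 := p.length_support
    have hip : i < p.length := by omega
    simp only [support_get]
    rw [hsame _ (hS0mem i (by omega)), hsame _ (hS0mem (i+1) (by omega)),
      hmem i (by omega), hmem (i+1) (by omega)]
    rcases he with h' | h' <;> rw [h'] <;> omega
  · have h0 : v ∈ R0 ↔ 0 % 2 = e := by
      have := hmem 0 (Nat.zero_le _)
      rwa [SimpleGraph.Walk.getVert_zero] at this
    rw [hsame v hvS0, h0]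
    cases c <;> simp [he_def]
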